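/- For a fixed integer N ≥ 1, the set of complex solutions (a_1, ..., a_{N+1}) to the system of equations a_{k-1} a_{k+1} = (1 - a_k)² for 2 ≤ k ≤ N, with boundary conditions a_1 = 1 and a_{N+1} = 1, and with all a_k ≠ 0, is finite. -/

import Mathlib

open Polynomial

/-- Pair of polynomials (r_j, s_j) with r_0 = s_0 = 1,
r_{j+1} = r_j - X s_j, s_{j+1} = r_{j+1} + s_j. -/
noncomputable def stmt5RS : ℕ → Polynomial ℂ × Polynomial ℂ
  | 0 => (1, 1)
  | j+1 => ((stmt5RS j).1 - Polynomial.X * (stmt5RS j).2,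
            (stmt5RS j).1 - Polynomial.X * (stmt5RS j).2 + (stmt5RS j).2)

lemma stmt5_key (j : ℕ) :
    (stmt5RS j).1 * (stmt5RS (j+1)).1 = 1 - Polynomial.X * (stmt5RS j).2 ^ 2 ∧
    Polynomial.X * (stmt5RS j).2 * (stmt5RS (j+1)).2 = 1 - (stmt5RS (j+1)).1 ^ 2 := by
  induction j with
  | zero => constructor <;> (simp [stmt5RS]; try ring)
  | succ j ih =>
    obtain ⟨hA, hB⟩ := ih
    have h1 : (stmt5RS (j+1)).1 * (stmt5RS (j+2)).1
        = 1 - Polynomial.X * (stmt5RS (j+1)).2 ^ 2 := by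
      show (stmt5RS (j+1)).1 * ((stmt5RS (j+1)).1 - Polynomial.X * (stmt5RS (j+1)).2) = _
      have hs : (stmt5RS (j+1)).2 = (stmt5RS (j+1)).1 + (stmt5RS j).2 := by
        show (stmt5RS j).1 - Polynomial.X * (stmt5RS j).2 + (stmt5RS j).2 = _; rfl
      rw [hs] at hB ⊢; linear_combination hB
    refine ⟨h1, ?_⟩
    have hr : (stmt5RS (j+2)).1 = (stmt5RS (j+1)).1 - Polynomial.X * (stmt5RS (j+1)).2 := rfl
    have hs : (stmt5RS (j+2)).2 = (stmt5RS (j+2)).1 + (stmt5RS (j+1)).2 := rfl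
    rw [hr] at h1; rw [hs, hr]; linear_combination h1

/-- Integer values at X = -1. -/
def stmt5UV : ℕ → ℕ × ℕ
  | 0 => (1, 1)
  | j+1 => ((stmt5UV j).1 + (stmt5UV j).2, (stmt5UV j).1 + 2 * (stmt5UV j).2)

lemma stmt5_eval_neg_one (j : ℕ) :
    (stmt5RS j).1.eval (-1) = ((stmt5UV j).1 : ℂ) ∧
    (stmt5RS j).2.eval (-1) = ((stmt5UV j).2 : ℂ) := by
  induction j with
  | zero => simp [stmt5RS, stmt5UV]
  | succ j ih =>
    obtain ⟨h1, h2⟩ := ih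
    constructor
    · show ((stmt5RS j).1 - Polynomial.X * (stmt5RS j).2).eval (-1) = _
      simp only [Polynomial.eval_sub, Polynomial.eval_mul, Polynomial.eval_X, h1, h2, stmt5UV]
      push_cast; ring
    · show ((stmt5RS j).1 - Polynomial.X * (stmt5RS j).2 + (stmt5RS j).2).eval (-1) = _
      simp only [Polynomial.eval_add, Polynomial.eval_sub, Polynomial.eval_mul,
        Polynomial.eval_X, h1, h2, stmt5UV]
      push_cast; ring

lemma stmt5_uv_pos (j : ℕ) : 1 ≤ (stmt5UV j).1 ∧ 1 ≤ (stmt5UV j).2 := by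
  induction j with
  | zero => simp [stmt5UV]
  | succ j ih => simp [stmt5UV]; omega

/-- The candidate solution sequence as a function of x = a_1. -/
noncomputable def stmt5b (x : ℂ) (k : ℕ) : ℂ :=
  if k % 2 = 0 then ((stmt5RS (k/2)).1.eval x) ^ 2
  else x * ((stmt5RS (k/2)).2.eval x) ^ 2

lemma stmt5b_even (x : ℂ) (j : ℕ) : stmt5b x (2*j) = ((stmt5RS j).1.eval x) ^ 2 := by
  have h1 : (2*j) % 2 = 0 := by omega
  have h2 : (2*j)/2 = j := by omega
  simp [stmt5b, h1, h2]

lemma stmt5b_odd (x : ℂ) (j : ℕ) : stmt5b x (2*j+1) = x * ((stmt5RS j).2.eval x) ^ 2 := by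
  have h1 : (2*j+1) % 2 = 1 := by omega
  have h2 : (2*j+1)/2 = j := by omega
  simp [stmt5b, h1, h2]

lemma stmt5b_rec (x : ℂ) (k : ℕ) :
    stmt5b x k * stmt5b x (k+2) = (1 - stmt5b x (k+1)) ^ 2 := by
  rcases Nat.even_or_odd k with ⟨j, hj⟩ | ⟨j, hj⟩
  · have h1 : k = 2*j := by omega
    rw [h1]
    have h2 : 2*j + 2 = 2*(j+1) := by omega
    rw [h2, stmt5b_even, stmt5b_even, stmt5b_odd]
    have h := congrArg (Polynomial.eval x) (stmt5_key j).1
    simp only [Polynomial.eval_mul, Polynomial.eval_sub, Polynomial.eval_one,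
      Polynomial.eval_pow, Polynomial.eval_X] at h
    calc ((stmt5RS j).1.eval x) ^ 2 * ((stmt5RS (j+1)).1.eval x) ^ 2
        = ((stmt5RS j).1.eval x * (stmt5RS (j+1)).1.eval x) ^ 2 := by ring
      _ = (1 - x * ((stmt5RS j).2.eval x) ^ 2) ^ 2 := by rw [h]
  · have h1 : k = 2*j+1 := by omega
    rw [h1]
    have h2 : 2*j + 1 + 2 = 2*(j+1)+1 := by omega
    have h3 : 2*j + 1 + 1 = 2*(j+1) := by omega
    rw [h2, h3, stmt5b_odd, stmt5b_odd, stmt5b_even]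
    have h := congrArg (Polynomial.eval x) (stmt5_key j).2
    simp only [Polynomial.eval_mul, Polynomial.eval_sub, Polynomial.eval_one,
      Polynomial.eval_pow, Polynomial.eval_X] at h
    calc x * ((stmt5RS j).2.eval x) ^ 2 * (x * ((stmt5RS (j+1)).2.eval x) ^ 2)
        = (x * (stmt5RS j).2.eval x * (stmt5RS (j+1)).2.eval x) ^ 2 := by ring
      _ = (1 - ((stmt5RS (j+1)).1.eval x) ^ 2) ^ 2 := by rw [h]

lemma stmt5b_zero (x : ℂ) : stmt5b x 0 = 1 := by simp [stmt5b, stmt5RS]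

lemma stmt5b_one (x : ℂ) : stmt5b x 1 = x := by simp [stmt5b, stmt5RS]

/-- Uniqueness: a solution of the system is determined by a_0 and a_1. -/
lemma stmt5_uniq {N : ℕ} (a : Fin (N+1) → ℂ) (hne : ∀ i, a i ≠ 0)
    (hrec : ∀ k : ℕ, (h2 : 2 ≤ k) → (hk : k ≤ N) →
      a ⟨k - 2, Nat.lt_succ_of_le (Nat.le_trans (Nat.sub_le k 2) hk)⟩ * a ⟨k, Nat.lt_succ_of_le hk⟩
        = (1 - a ⟨k - 1, Nat.lt_succ_of_le (Nat.le_trans (Nat.sub_le k 1) hk)⟩) ^ 2)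
    (c : ℕ → ℂ) (hc0 : c 0 = a ⟨0, by omega⟩) (hc1 : ∀ h : 1 ≤ N, c 1 = a ⟨1, by omega⟩)
    (hcrec : ∀ k : ℕ, c k * c (k+2) = (1 - c (k+1)) ^ 2) :
    ∀ k : ℕ, (h : k ≤ N) → a ⟨k, Nat.lt_succ_of_le h⟩ = c k := by
  intro k
  induction k using Nat.strong_induction_on with
  | _ k ih =>
    intro hk
    match k, hk with
    | 0, _ => exact hc0.symm
    | 1, h => exact (hc1 h).symm
    | (m+2), hk =>
      have h1 : a ⟨m, by omega⟩ = c m := ih m (by omega) (by omega)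
      have h2 : a ⟨m+1, by omega⟩ = c (m+1) := ih (m+1) (by omega) (by omega)
      have hr := hrec (m+2) (by omega) hk
      simp only [Nat.add_sub_cancel] at hr
      have hr' : a ⟨m, by omega⟩ * a ⟨m+2, by omega⟩ = (1 - a ⟨m+1, by omega⟩) ^ 2 := hr
      rw [h1, h2] at hr'
      have hc := hcrec m
      have hm : c m ≠ 0 := by rw [← h1]; exact hne _
      field_simp at hr' hc ⊢
      have : c m * a ⟨m+2, by omega⟩ = c m * c (m+2) := by rw [hr', hc]
      exact mul_left_cancel₀ hm this

theorem stmt_5 (N : ℕ) (hN : 1 ≤ N) :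
    Set.Finite {a : Fin (N + 1) → ℂ |
      a ⟨0, by omega⟩ = 1 ∧ a ⟨N, by omega⟩ = 1 ∧ (∀ i, a i ≠ 0) ∧
      ∀ k : ℕ, (h2 : 2 ≤ k) → (hk : k ≤ N) →
        a ⟨k - 2, by omega⟩ * a ⟨k, by omega⟩ = (1 - a ⟨k - 1, by omega⟩) ^ 2} := by
  set S := {a : Fin (N + 1) → ℂ |
      a ⟨0, by omega⟩ = 1 ∧ a ⟨N, by omega⟩ = 1 ∧ (∀ i, a i ≠ 0) ∧
      ∀ k : ℕ, (h2 : 2 ≤ k) → (hk : k ≤ N) →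
        a ⟨k - 2, by omega⟩ * a ⟨k, by omega⟩ = (1 - a ⟨k - 1, by omega⟩) ^ 2} with hS
  -- the key polynomial
  set P : Polynomial ℂ :=
    if N % 2 = 0 then (stmt5RS (N/2)).1 ^ 2 - 1
    else Polynomial.X * (stmt5RS (N/2)).2 ^ 2 - 1 with hP
  have hPne : P ≠ 0 := by
    intro h0
    have he := congrArg (Polynomial.eval (-1 : ℂ)) h0
    rw [hP] at he
    obtain ⟨hu, hv⟩ := stmt5_eval_neg_one (N/2)
    obtain ⟨hu1, hv1⟩ := stmt5_uv_pos (N/2)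
    by_cases hpar : N % 2 = 0
    · rw [if_pos hpar] at he
      simp only [Polynomial.eval_sub, Polynomial.eval_pow, Polynomial.eval_one,
        Polynomial.eval_zero, hu] at he
      have hm : 1 ≤ N / 2 := by omega
      have h2 : 2 ≤ (stmt5UV (N/2)).1 := by
        rcases Nat.exists_eq_add_of_le hm with ⟨m', hm'⟩
        have : N / 2 = (N/2 - 1) + 1 := by omega
        rw [this]
        have := stmt5_uv_pos (N/2 - 1)
        simp [stmt5UV]; omega
      have hcast : ((((stmt5UV (N/2)).1 ^ 2 : ℕ)) : ℂ) = ((1 : ℕ) : ℂ) := by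
        push_cast; linear_combination he
      have := Nat.cast_injective (R := ℂ) hcast
      nlinarith
    · rw [if_neg hpar] at he
      simp only [Polynomial.eval_sub, Polynomial.eval_mul, Polynomial.eval_pow,
        Polynomial.eval_one, Polynomial.eval_zero, Polynomial.eval_X, hv] at he
      have : ((-1 : ℂ)) * ((stmt5UV (N/2)).2 : ℂ) ^ 2 - 1 = 0 := he
      have h2 : (((stmt5UV (N/2)).2 ^ 2 + 1 : ℕ) : ℂ) = 0 := by push_cast; linear_combination -this
      have := Nat.cast_injective (R := ℂ) (by rw [h2]; simp : (((stmt5UV (N/2)).2 ^ 2 + 1 : ℕ) : ℂ) = ((0 : ℕ) : ℂ))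
      omega
  -- every solution equals stmt5b (a 1) pointwise
  have key : ∀ a ∈ S, ∀ k : ℕ, (h : k ≤ N) →
      a ⟨k, by omega⟩ = stmt5b (a ⟨1, by omega⟩) k := by
    intro a ha
    obtain ⟨h0, hNeq, hne, hrec⟩ := ha
    exact stmt5_uniq a hne hrec _ (by rw [stmt5b_zero, h0]) (fun _ => stmt5b_one _)
      (fun k => stmt5b_rec _ k)
  -- the first coordinate is a root of P
  have himg : (fun a : Fin (N+1) → ℂ => a ⟨1, by omega⟩) '' S ⊆ {x | P.IsRoot x} := by
    rintro x ⟨a, ha, rfl⟩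
    obtain ⟨h0, hNeq, hne, hrec⟩ := ha
    have hk := key a ⟨h0, hNeq, hne, hrec⟩ N le_rfl
    rw [hNeq] at hk
    simp only [Set.mem_setOf_eq, Polynomial.IsRoot, hP]
    by_cases hpar : N % 2 = 0
    · rw [if_pos hpar]
      have : stmt5b (a ⟨1, by omega⟩) N = ((stmt5RS (N/2)).1.eval (a ⟨1, by omega⟩)) ^ 2 := by
        simp [stmt5b, hpar]
      simp [Polynomial.eval_sub, Polynomial.eval_pow, ← this, ← hk]
    · rw [if_neg hpar]
      have : stmt5b (a ⟨1, by omega⟩) N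
          = a ⟨1, by omega⟩ * ((stmt5RS (N/2)).2.eval (a ⟨1, by omega⟩)) ^ 2 := by
        simp only [stmt5b]; rw [if_neg hpar]
      simp only [Polynomial.eval_sub, Polynomial.eval_mul, Polynomial.eval_pow,
        Polynomial.eval_one, Polynomial.eval_X]
      rw [← this, ← hk]; ring
  -- injectivity on S
  have hinj : Set.InjOn (fun a : Fin (N+1) → ℂ => a ⟨1, by omega⟩) S := by
    intro a ha a' ha' h
    funext i
    have hi : (i : ℕ) ≤ N := by omega
    have h1 := key a ha i hi
    have h2 := key a' ha' i hi
    simp only at h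
    rw [h] at h1
    have : a ⟨(i : ℕ), by omega⟩ = a' ⟨(i : ℕ), by omega⟩ := by rw [h1, h2]
    simpa using this
  exact Set.Finite.of_finite_image
    ((Polynomial.finite_setOf_isRoot hPne).subset himg) hinj
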